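/- Fix n ≥ 1 and real numbers k₁, ..., kₙ, and for real numbers u, v and an integer m ≥ 1 define f_m(u, v) = Σ_{S ⊆ {1,...,n}} (−1)^{|S|} [ (u + s_S)^m + (v + s_S)^m ]. Then for all real u, v, one has f_{n+1}(u, v) = (−1)^n · (n+1)! · k₁ k₂ ⋯ kₙ · (u + v + Σ_{i=1}^{n} k_i). -/

import Mathlib

open Finset

lemma pow_sub_add_pow' (y c : ℝ) (m : ℕ) :
    y ^ m - (y + c) ^ m =
      -∑ j ∈ range m, y ^ j * c ^ (m - j) * (m.choose j : ℝ) := by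
  rw [add_pow, Finset.sum_range_succ]
  simp [Nat.choose_self]

lemma step1 (k : ℕ → ℝ) (a : ℕ) (s : Finset ℕ) (ha : a ∉ s) (m : ℕ) (x : ℝ) :
    ∑ S ∈ (insert a s).powerset, (-1:ℝ)^S.card * (x + ∑ i ∈ S, k i)^m =
      ∑ j ∈ range m, -((k a)^(m-j) * (m.choose j : ℝ) *
        ∑ t ∈ s.powerset, (-1:ℝ)^t.card * (x + ∑ i ∈ t, k i)^j) := by
  rw [Finset.sum_powerset_insert ha]
  have h2 : ∑ t ∈ s.powerset, (-1:ℝ)^(insert a t).card * (x + ∑ i ∈ insert a t, k i)^m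
      = ∑ t ∈ s.powerset, -((-1:ℝ)^t.card * ((x + ∑ i ∈ t, k i) + k a)^m) := by
    apply Finset.sum_congr rfl
    intro t ht
    have hat : a ∉ t := fun h => ha (Finset.mem_powerset.mp ht h)
    rw [Finset.card_insert_of_notMem hat, Finset.sum_insert hat, pow_succ]
    ring
  rw [h2, ← Finset.sum_add_distrib]
  have h3 : ∀ t ∈ s.powerset,
      (-1:ℝ)^t.card * (x + ∑ i ∈ t, k i)^m + -((-1:ℝ)^t.card * ((x + ∑ i ∈ t, k i) + k a)^m)
        = ∑ j ∈ range m, -((k a)^(m-j) * (m.choose j : ℝ) * ((-1:ℝ)^t.card * (x + ∑ i ∈ t, k i)^j)) := by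
    intro t _
    have hp := pow_sub_add_pow' (x + ∑ i ∈ t, k i) (k a) m
    have he : (-1:ℝ)^t.card * (x + ∑ i ∈ t, k i)^m + -((-1:ℝ)^t.card * ((x + ∑ i ∈ t, k i) + k a)^m)
        = (-1:ℝ)^t.card * ((x + ∑ i ∈ t, k i)^m - ((x + ∑ i ∈ t, k i) + k a)^m) := by ring
    rw [he, hp, mul_neg, Finset.mul_sum, ← Finset.sum_neg_distrib]
    apply Finset.sum_congr rfl
    intro j _
    ring
  rw [Finset.sum_congr rfl h3, Finset.sum_comm]
  apply Finset.sum_congr rfl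
  intro j _
  simp [Finset.mul_sum, Finset.sum_neg_distrib]

lemma keyL (k : ℕ → ℝ) (A : Finset ℕ) :
    ∀ m ≤ A.card, ∀ x : ℝ,
      ∑ S ∈ A.powerset, (-1:ℝ)^S.card * (x + ∑ i ∈ S, k i)^m =
        if m = A.card then (-1:ℝ)^A.card * (m.factorial : ℝ) * ∏ i ∈ A, k i else 0 := by
  induction A using Finset.induction_on with
  | empty =>
    intro m hm x
    simp only [Finset.card_empty, Nat.le_zero] at hm
    subst hm
    simp
  | @insert a s ha ih =>
    intro m hm x
    rw [step1 k a s ha m x]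
    rw [Finset.card_insert_of_notMem ha] at hm ⊢
    have hin : ∀ j ∈ range m, -((k a)^(m-j) * (m.choose j : ℝ) *
        ∑ t ∈ s.powerset, (-1:ℝ)^t.card * (x + ∑ i ∈ t, k i)^j)
        = -((k a)^(m-j) * (m.choose j : ℝ) *
          (if j = s.card then (-1:ℝ)^s.card * (j.factorial : ℝ) * ∏ i ∈ s, k i else 0)) := by
      intro j hj
      rw [ih j (by have := Finset.mem_range.mp hj; omega) x]
    rw [Finset.sum_congr rfl hin]
    by_cases hms : m = s.card + 1
    · subst hms
      rw [if_pos rfl]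
      rw [Finset.sum_eq_single s.card]
      · rw [if_pos rfl]
        have h1 : s.card + 1 - s.card = 1 := by omega
        rw [h1, Nat.choose_succ_self_right, Finset.prod_insert ha, pow_succ,
          Nat.factorial_succ]
        push_cast
        ring
      · intro j hj hjne
        rw [if_neg hjne, mul_zero, neg_zero]
      · intro h
        exact absurd (Finset.self_mem_range_succ s.card) h
    · rw [if_neg hms]
      apply Finset.sum_eq_zero
      intro j hj
      have : j ≠ s.card := by have := Finset.mem_range.mp hj; omega
      rw [if_neg this, mul_zero, neg_zero]

lemma keyM (k : ℕ → ℝ) (A : Finset ℕ) : ∀ x : ℝ,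
    ∑ S ∈ A.powerset, (-1:ℝ)^S.card * (x + ∑ i ∈ S, k i)^(A.card+1) =
      (-1:ℝ)^A.card * ((A.card+1).factorial : ℝ) * (∏ i ∈ A, k i) *
        (x + (∑ i ∈ A, k i)/2) := by
  induction A using Finset.induction_on with
  | empty => intro x; simp
  | @insert a s ha ih =>
    intro x
    rw [Finset.card_insert_of_notMem ha]
    rw [step1 k a s ha (s.card + 1 + 1) x]
    rw [Finset.sum_range_succ]
    -- last term j = s.card + 1 : use ih
    rw [ih x]
    -- remaining terms: use keyL
    have hin : ∀ j ∈ range (s.card + 1), -((k a)^(s.card+1+1-j) * ((s.card+1+1).choose j : ℝ) *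
        ∑ t ∈ s.powerset, (-1:ℝ)^t.card * (x + ∑ i ∈ t, k i)^j)
        = -((k a)^(s.card+1+1-j) * ((s.card+1+1).choose j : ℝ) *
          (if j = s.card then (-1:ℝ)^s.card * (j.factorial : ℝ) * ∏ i ∈ s, k i else 0)) := by
      intro j hj
      rw [keyL k s j (by have := Finset.mem_range.mp hj; omega) x]
    rw [Finset.sum_congr rfl hin, Finset.sum_eq_single s.card]
    · rw [if_pos rfl]
      have h1 : s.card + 1 + 1 - s.card = 2 := by omega
      have h2 : s.card + 1 + 1 - (s.card + 1) = 1 := by omega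
      rw [h1, h2, Nat.choose_succ_self_right]
      have hc2 : (((s.card+1+1).choose s.card : ℕ) : ℝ) * 2 = (s.card+2)*(s.card+1) := by
        have h := Nat.choose_mul_factorial_mul_factorial (show s.card ≤ s.card+2 by omega)
        have h3 : s.card + 2 - s.card = 2 := by omega
        rw [h3] at h
        have h4 : ((s.card+2).choose s.card : ℝ) * (s.card.factorial : ℝ) * 2 =
            ((s.card+2).factorial : ℝ) := by
          exact_mod_cast congrArg (Nat.cast (R := ℝ)) h
        have h5 : ((s.card+2).factorial : ℝ) = (s.card+2)*(s.card+1)*(s.card.factorial : ℝ) := by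
          rw [Nat.factorial_succ, Nat.factorial_succ]; push_cast; ring
        have hfz : (s.card.factorial : ℝ) ≠ 0 := by positivity
        have hthis : (s.card+1+1) = s.card + 2 := by omega
        rw [hthis]
        apply mul_right_cancel₀ hfz
        calc ((s.card+2).choose s.card : ℝ) * 2 * (s.card.factorial : ℝ)
            = ((s.card+2).choose s.card : ℝ) * (s.card.factorial : ℝ) * 2 := by ring
          _ = ((s.card+2).factorial : ℝ) := h4
          _ = ((s.card:ℝ)+2)*((s.card:ℝ)+1)*(s.card.factorial : ℝ) := h5
      rw [Finset.prod_insert ha, Finset.sum_insert ha]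
      have hfs : ((s.card+1+1).factorial : ℝ) = (s.card+2)*(s.card+1)*(s.card.factorial:ℝ) := by
        rw [Nat.factorial_succ, Nat.factorial_succ]; push_cast; ring
      have hfs1 : ((s.card+1).factorial : ℝ) = (s.card+1)*(s.card.factorial:ℝ) := by
        rw [Nat.factorial_succ]; push_cast; ring
      rw [hfs, hfs1, pow_succ (-1:ℝ) s.card]
      push_cast
      linear_combination (-(k a^2 * (-1:ℝ)^s.card * (s.card.factorial : ℝ) * (∏ i ∈ s, k i))/2) * hc2
    · intro j hj hjne
      rw [if_neg hjne, mul_zero, neg_zero]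
    · intro h
      exact absurd (Finset.self_mem_range_succ s.card) h

theorem alternating_sum_power_n_succ (n : ℕ) (hn : 1 ≤ n) (k : ℕ → ℝ) (u v : ℝ) :
    ∑ S ∈ (Finset.Icc 1 n).powerset, (-1 : ℝ) ^ S.card *
        ((u + ∑ i ∈ S, k i) ^ (n + 1) + (v + ∑ i ∈ S, k i) ^ (n + 1)) =
      (-1 : ℝ) ^ n * (Nat.factorial (n + 1) : ℝ) * (∏ i ∈ Finset.Icc 1 n, k i) *
        (u + v + ∑ i ∈ Finset.Icc 1 n, k i) := by
  have hcard : (Finset.Icc 1 n).card = n := by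
    rw [Nat.card_Icc]; omega
  have hsplit : ∑ S ∈ (Finset.Icc 1 n).powerset, (-1 : ℝ) ^ S.card *
        ((u + ∑ i ∈ S, k i) ^ (n + 1) + (v + ∑ i ∈ S, k i) ^ (n + 1))
      = (∑ S ∈ (Finset.Icc 1 n).powerset, (-1:ℝ)^S.card * (u + ∑ i ∈ S, k i)^((Finset.Icc 1 n).card + 1))
      + (∑ S ∈ (Finset.Icc 1 n).powerset, (-1:ℝ)^S.card * (v + ∑ i ∈ S, k i)^((Finset.Icc 1 n).card + 1)) := by
    rw [← Finset.sum_add_distrib]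
    apply Finset.sum_congr rfl
    intro S _
    rw [hcard]
    ring
  rw [hsplit, keyM k (Finset.Icc 1 n) u, keyM k (Finset.Icc 1 n) v, hcard]
  ring
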